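/- Let F be a finite field, Q ∈ F[t] a nonzero polynomial, and T(y) ∈ (F[t]/(Q))[y] a nonzero polynomial of degree at most d. Then the number of roots of T in the quotient ring F[t]/(Q) is at most d·|Q|/lpf(Q), where |Q| = |F|^{deg Q} is the cardinality of F[t]/(Q) and lpf(Q) is the minimum of |F|^{deg P} over monic irreducible factors P of Q. -/

import Mathlib

open Polynomial UniqueFactorizationMonoid in
theorem exists_prime_pow_dvd_not_dvd' {F : Type*} [Field F]
    {Q c : F[X]} (hQ : Q ≠ 0) (hc : ¬ Q ∣ c) :
    ∃ (p : F[X]) (s : ℕ), Prime p ∧ p.Monic ∧ 0 < s ∧ p ^ s ∣ Q ∧ ¬ p ^ s ∣ c := by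
  classical
  have hc0 : c ≠ 0 := fun h => hc (h ▸ dvd_zero Q)
  rw [dvd_iff_normalizedFactors_le_normalizedFactors hQ hc0, Multiset.le_iff_count] at hc
  push_neg at hc
  obtain ⟨p, hp⟩ := hc
  have hpmem : p ∈ normalizedFactors Q := by
    rw [← Multiset.count_pos]; omega
  have hirr := irreducible_of_normalized_factor p hpmem
  have hnorm := normalize_normalized_factor p hpmem
  have hp0 : p ≠ 0 := hirr.ne_zero
  refine ⟨p, (normalizedFactors Q).count p, irreducible_iff_prime.mp hirr,
    hnorm ▸ monic_normalize hp0, by omega, ?_, ?_⟩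
  · apply pow_dvd_of_le_emultiplicity
    rw [emultiplicity_eq_count_normalizedFactors hirr hQ, hnorm]
  · rw [pow_dvd_iff_le_emultiplicity, emultiplicity_eq_count_normalizedFactors hirr hc0, hnorm]
    exact_mod_cast not_le.mpr (by exact_mod_cast hp)

open Polynomial in
theorem exists_lift' {F : Type*} [CommRing F] (I : Ideal F) (d : ℕ)
    (T : Polynomial (F ⧸ I)) (hdeg : T.natDegree ≤ d) :
    ∃ U : Polynomial F, U.map (Ideal.Quotient.mk I) = T ∧ U.natDegree ≤ d := by
  classical
  choose sec hsec using Ideal.Quotient.mk_surjective (I := I)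
  refine ⟨∑ i ∈ Finset.range (d+1), C (sec (T.coeff i)) * X^i, ?_, ?_⟩
  · rw [Polynomial.map_sum]
    conv_rhs => rw [Polynomial.as_sum_range' T (d+1) (Nat.lt_succ_of_le hdeg)]
    refine Finset.sum_congr rfl fun i _ => ?_
    rw [Polynomial.map_mul, map_C, hsec, Polynomial.map_pow, map_X, C_mul_X_pow_eq_monomial]
  · exact Polynomial.natDegree_sum_le_of_forall_le _ _ fun i hi =>
      (natDegree_C_mul_X_pow_le _ _).trans (Nat.lt_succ_iff.mp (Finset.mem_range.mp hi))

noncomputable def quotFintype' {F : Type*} [Field F] [Fintype F] {Q : Polynomial F} (hQ : Q ≠ 0) :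
    Fintype (Polynomial F ⧸ Ideal.span {Q}) :=
  (Module.fintypeOfFintype (AdjoinRoot.powerBasis hQ).basis : Fintype (AdjoinRoot Q))

theorem quotCard' {F : Type*} [Field F] [Fintype F] {Q : Polynomial F} (hQ : Q ≠ 0)
    [inst : Fintype (Polynomial F ⧸ Ideal.span {Q})] :
    Fintype.card (Polynomial F ⧸ Ideal.span {Q}) = Fintype.card F ^ Q.natDegree := by
  letI : Fintype (AdjoinRoot Q) := inst
  rw [show Fintype.card (Polynomial F ⧸ Ideal.span {Q}) = Fintype.card (AdjoinRoot Q) from rfl,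
    Module.card_fintype (AdjoinRoot.powerBasis hQ).basis]
  simp

/-- `lpf Q` is the size `|F|^(deg P)` of the least monic irreducible factor `P` of `Q`. -/
noncomputable def lpf {F : Type*} [Field F] [Fintype F] (Q : Polynomial F) : ℕ :=
  sInf {n : ℕ | ∃ P : Polynomial F, P.Monic ∧ Irreducible P ∧ P ∣ Q ∧
    n = Fintype.card F ^ P.natDegree}

set_option maxHeartbeats 1000000 in
set_option synthInstance.maxHeartbeats 400000 in
theorem stmt_2 {F : Type*} [Field F] [Fintype F] (Q : Polynomial F) (hQ : Q ≠ 0)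
    (d : ℕ) (T : Polynomial (Polynomial F ⧸ Ideal.span {Q})) (hT : T ≠ 0)
    (hdeg : T.natDegree ≤ d) :
    (Nat.card {y : Polynomial F ⧸ Ideal.span {Q} // Polynomial.eval y T = 0} : ℝ) ≤
      (d : ℝ) * (Fintype.card F ^ Q.natDegree : ℝ) / (lpf Q : ℝ) := by
  classical
  obtain ⟨U, hU, hUdeg⟩ := exists_lift' (Ideal.span {Q}) d T hdeg
  obtain ⟨i₀, hi₀⟩ : ∃ i, T.coeff i ≠ 0 := by
    by_contra h; push_neg at h; exact hT (Polynomial.ext fun i => by simp [h])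
  have hc : ¬ Q ∣ U.coeff i₀ := by
    rw [← Ideal.Quotient.eq_zero_iff_dvd]
    intro h
    apply hi₀
    rw [← hU, Polynomial.coeff_map]
    exact h
  obtain ⟨p, s, hpprime, hpmonic, hs, hpsQ, hpsc⟩ := exists_prime_pow_dvd_not_dvd' hQ hc
  have hp0 : p ≠ 0 := hpprime.ne_zero
  have hpQ : p ∣ Q := dvd_trans (dvd_pow_self p hs.ne') hpsQ
  have hU0 : U ≠ 0 := by rintro rfl; rw [Polynomial.map_zero] at hU; exact hT hU.symm
  have hCp : Irreducible (Polynomial.C p : Polynomial (Polynomial F)) :=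
    ((Polynomial.prime_C_iff).mpr hpprime).irreducible
  obtain ⟨j, W, hWp, hUW⟩ := WfDvdMonoid.max_power_factor hU0 hCp
  have hjs : j < s := by
    by_contra h
    push_neg at h
    apply hpsc
    have h1 : p ^ j ∣ U.coeff i₀ := by
      rw [hUW, ← Polynomial.C_pow, Polynomial.coeff_C_mul]
      exact Dvd.intro _ rfl
    exact (pow_dvd_pow p h).trans h1
  -- the reduction mod p
  set mkP := Ideal.Quotient.mk (Ideal.span {p}) with hmkP
  have hle : Ideal.span {Q} ≤ Ideal.span {p} := Ideal.span_singleton_le_span_singleton.mpr hpQ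
  set φ := Ideal.Quotient.factor hle with hφ
  haveI : (Ideal.span {p}).IsPrime := (Ideal.span_singleton_prime hp0).mpr hpprime
  set WK := W.map mkP with hWK
  have hWK0 : WK ≠ 0 := by
    intro h
    apply hWp
    rw [Polynomial.C_dvd_iff_dvd_coeff]
    intro i
    rw [← Ideal.Quotient.eq_zero_iff_dvd]
    have h2 := congrArg (fun q => Polynomial.coeff q i) h
    simp only [hWK, Polynomial.coeff_map, Polynomial.coeff_zero] at h2
    exact h2
  have hWdvdU : W ∣ U := ⟨Polynomial.C p ^ j, by rw [hUW]; ring⟩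
  have hWKdeg : WK.natDegree ≤ d :=
    (Polynomial.natDegree_map_le).trans
      ((Polynomial.natDegree_le_of_dvd hWdvdU hU0).trans hUdeg)
  -- root transfer
  have hroot : ∀ y : Polynomial F ⧸ Ideal.span {Q}, Polynomial.eval y T = 0 →
      Polynomial.eval (φ y) WK = 0 := by
    intro y hy
    obtain ⟨A, rfl⟩ := Ideal.Quotient.mk_surjective y
    rw [← hU, Polynomial.eval_map, Polynomial.eval₂_at_apply,
      Ideal.Quotient.eq_zero_iff_dvd] at hy
    have hUA : Polynomial.eval A U = p ^ j * Polynomial.eval A W := by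
      rw [hUW]; simp
    have h1 : p ^ s ∣ p ^ j * Polynomial.eval A W := hUA ▸ hpsQ.trans hy
    have h2 : p ∣ Polynomial.eval A W := by
      have h3 : p ^ j * p ∣ p ^ j * Polynomial.eval A W := by
        rw [← pow_succ]
        exact (pow_dvd_pow p hjs).trans h1
      exact (mul_dvd_mul_iff_left (pow_ne_zero j hp0)).mp h3
    rw [show φ ((Ideal.Quotient.mk (Ideal.span {Q})) A) = mkP A from
        Ideal.Quotient.factor_mk hle A,
      hWK, Polynomial.eval_map, Polynomial.eval₂_at_apply, hmkP,
      Ideal.Quotient.eq_zero_iff_dvd]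
    exact h2
  -- counting
  letI instR : Fintype (Polynomial F ⧸ Ideal.span {Q}) := quotFintype' hQ
  letI instK : Fintype (Polynomial F ⧸ Ideal.span {p}) := quotFintype' hp0
  have cardR : Fintype.card (Polynomial F ⧸ Ideal.span {Q}) = Fintype.card F ^ Q.natDegree :=
    quotCard' hQ
  have cardK : Fintype.card (Polynomial F ⧸ Ideal.span {p}) = Fintype.card F ^ p.natDegree :=
    quotCard' hp0
  have hφsurj : Function.Surjective φ := by
    intro z
    obtain ⟨A, rfl⟩ := Ideal.Quotient.mk_surjective z
    exact ⟨Ideal.Quotient.mk _ A, Ideal.Quotient.factor_mk hle A⟩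
  set m := (Finset.univ.filter (fun y : Polynomial F ⧸ Ideal.span {Q} => φ y = 0)).card with hm
  have hfiber : ∀ z : Polynomial F ⧸ Ideal.span {p},
      (Finset.univ.filter (fun y : Polynomial F ⧸ Ideal.span {Q} => φ y = z)).card = m := by
    intro z
    obtain ⟨y₀, hy₀⟩ := hφsurj z
    rw [hm]
    apply Finset.card_bij' (fun y _ => y - y₀) (fun y _ => y + y₀)
    · intro a ha
      simp only [Finset.mem_filter, Finset.mem_univ, true_and] at ha ⊢
      rw [RingHom.map_sub φ, ha, hy₀, sub_self]
    · intro a ha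
      simp only [Finset.mem_filter, Finset.mem_univ, true_and] at ha ⊢
      rw [RingHom.map_add φ, ha, hy₀, zero_add]
    · intro a _; ring
    · intro a _; ring
  have hsum : Fintype.card (Polynomial F ⧸ Ideal.span {Q}) =
      Fintype.card (Polynomial F ⧸ Ideal.span {p}) * m := by
    rw [← Finset.card_univ,
      Finset.card_eq_sum_card_fiberwise (fun x _ => Finset.mem_univ (φ x))]
    rw [Finset.sum_congr rfl (fun z _ => hfiber z), Finset.sum_const, ← Finset.card_univ,
      smul_eq_mul]
  set S := WK.roots.toFinset with hS
  have hScard : S.card ≤ d :=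
    (Multiset.toFinset_card_le _).trans ((Polynomial.card_roots' WK).trans hWKdeg)
  have hsub : (Finset.univ.filter
        (fun y : Polynomial F ⧸ Ideal.span {Q} => Polynomial.eval y T = 0)) ⊆
      S.biUnion (fun z => Finset.univ.filter
        (fun y : Polynomial F ⧸ Ideal.span {Q} => φ y = z)) := by
    intro y hy
    simp only [Finset.mem_filter, Finset.mem_univ, true_and] at hy
    refine Finset.mem_biUnion.mpr ⟨φ y, ?_, by simp⟩
    rw [hS, Multiset.mem_toFinset, Polynomial.mem_roots hWK0]
    exact hroot y hy
  have hcount : (Finset.univ.filter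
      (fun y : Polynomial F ⧸ Ideal.span {Q} => Polynomial.eval y T = 0)).card ≤ d * m := by
    calc (Finset.univ.filter
        (fun y : Polynomial F ⧸ Ideal.span {Q} => Polynomial.eval y T = 0)).card
        ≤ (S.biUnion (fun z => Finset.univ.filter
            (fun y : Polynomial F ⧸ Ideal.span {Q} => φ y = z))).card :=
          Finset.card_le_card hsub
      _ ≤ ∑ z ∈ S, (Finset.univ.filter
            (fun y : Polynomial F ⧸ Ideal.span {Q} => φ y = z)).card :=
          Finset.card_biUnion_le
      _ = S.card * m := by rw [Finset.sum_congr rfl (fun z _ => hfiber z), Finset.sum_const,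
            smul_eq_mul]
      _ ≤ d * m := Nat.mul_le_mul_right m hScard
  have hNat : Nat.card {y : Polynomial F ⧸ Ideal.span {Q} // Polynomial.eval y T = 0} =
      (Finset.univ.filter
        (fun y : Polynomial F ⧸ Ideal.span {Q} => Polynomial.eval y T = 0)).card := by
    rw [Nat.card_eq_fintype_card, Fintype.card_subtype]
  -- lpf facts
  have hlpfle : lpf Q ≤ Fintype.card F ^ p.natDegree :=
    Nat.sInf_le ⟨p, hpmonic, hpprime.irreducible, hpQ, rfl⟩
  have hlpfpos : 0 < lpf Q := by
    have hmem : lpf Q ∈ {n : ℕ | ∃ P : Polynomial F, P.Monic ∧ Irreducible P ∧ P ∣ Q ∧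
        n = Fintype.card F ^ P.natDegree} :=
      Nat.sInf_mem ⟨_, p, hpmonic, hpprime.irreducible, hpQ, rfl⟩
    obtain ⟨P', _, _, _, hP'⟩ := hmem
    rw [hP']
    exact pow_pos Fintype.card_pos _
  -- finish over ℝ
  have hKpos : (0:ℝ) < (Fintype.card F ^ p.natDegree : ℕ) := by positivity
  have hmR : (m : ℝ) = (Fintype.card F ^ Q.natDegree : ℕ) / (Fintype.card F ^ p.natDegree : ℕ) := by
    rw [eq_div_iff hKpos.ne']
    rw [← Nat.cast_mul]
    norm_cast
    rw [← cardK, ← cardR, hsum, mul_comm]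
  rw [hNat]
  calc ((Finset.univ.filter
      (fun y : Polynomial F ⧸ Ideal.span {Q} => Polynomial.eval y T = 0)).card : ℝ)
      ≤ ((d * m : ℕ) : ℝ) := by exact_mod_cast hcount
    _ = (d : ℝ) * ((Fintype.card F ^ Q.natDegree : ℕ) : ℝ) / (Fintype.card F ^ p.natDegree : ℕ) := by
        rw [Nat.cast_mul, hmR]; ring
    _ ≤ (d : ℝ) * ((Fintype.card F ^ Q.natDegree : ℕ) : ℝ) / (lpf Q : ℝ) := by
        have h1 : (0:ℝ) ≤ (d : ℝ) * ((Fintype.card F ^ Q.natDegree : ℕ) : ℝ) := by positivity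
        have h2 : (0:ℝ) < (lpf Q : ℝ) := by exact_mod_cast hlpfpos
        have h3 : (lpf Q : ℝ) ≤ ((Fintype.card F ^ p.natDegree : ℕ) : ℝ) := by
          exact_mod_cast hlpfle
        exact div_le_div_of_nonneg_left h1 h2 h3
    _ = (d : ℝ) * (Fintype.card F ^ Q.natDegree : ℝ) / (lpf Q : ℝ) := by push_cast; ring
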